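/- arXiv:2505.19143 — 2 statements merged into one kernel-verified Lean document; each statement's English description precedes it below -/
import Mathlib

section
/- (Hölder-type duality inequality between block spaces and Bourgain-Morrey spaces.) Let $X$ be a Banach space with a predual $^*X$ (i.e., $(^*X)^* = X$), let $1 < p < t < r < \infty$. If $g \in \mathcal{H}_{p'}^{t',r'}(^*X)$ and $f \in M_p^{t,r}(X)$, then the function $x \mapsto \langle g(x), f(x) \rangle$ is integrable and $\big| \int_{\mathbb{R}^n} \langle g(x), f(x) \rangle \, dx \big| \le \|g\|_{\mathcal{H}_{p'}^{t',r'}(^*X)} \, \|f\|_{M_p^{t,r}(X)}$. -/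
open MeasureTheory Filter ENNReal

noncomputable section

/-- The dyadic cube `Q_{j,m} = ∏ᵢ [2^{-j} mᵢ, 2^{-j}(mᵢ+1))` in `ℝⁿ`. -/
def dyadicCube (n : ℕ) (j : ℤ) (m : Fin n → ℤ) : Set (Fin n → ℝ) :=
  {x | ∀ i, (2:ℝ) ^ (-(j:ℝ)) * m i ≤ x i ∧ x i < (2:ℝ) ^ (-(j:ℝ)) * (m i + 1)}

/-- The volume `2^{-jn}` of a dyadic cube of generation `j`, as an extended nonnegative real. -/
def cubeVol (n : ℕ) (j : ℤ) : ℝ≥0∞ := (2:ℝ≥0∞) ^ (-((j:ℝ) * n))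

/-- The `ℓ^r` norm of an `ℝ≥0∞`-valued family, `r ∈ (0,∞]`. -/
def lrNorm {ι : Type*} (r : ℝ≥0∞) (a : ι → ℝ≥0∞) : ℝ≥0∞ :=
  if r = ∞ then ⨆ i, a i else (∑' i, a i ^ r.toReal) ^ (1 / r.toReal)

/-- The Bourgain–Morrey norm of an `X`-valued function on `ℝⁿ`. -/
def BMnorm (n : ℕ) (p t : ℝ) (r : ℝ≥0∞) {X : Type*} [NormedAddCommGroup X]
    (f : (Fin n → ℝ) → X) : ℝ≥0∞ :=
  lrNorm r fun jm : ℤ × (Fin n → ℤ) =>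
    cubeVol n jm.1 ^ (1/t - 1/p) *
      (∫⁻ x in dyadicCube n jm.1 jm.2, (‖f x‖₊ : ℝ≥0∞) ^ p) ^ (1/p)

/-- Membership in the Bourgain–Morrey space `M_p^{t,r}(X)`. -/
def MemBM (n : ℕ) (p t : ℝ) (r : ℝ≥0∞) {X : Type*} [NormedAddCommGroup X]
    (f : (Fin n → ℝ) → X) : Prop :=
  AEStronglyMeasurable f volume ∧ BMnorm n p t r f < ∞

/-- The conjugate exponent `a' = a/(a-1)`. -/
def conj (a : ℝ) : ℝ := a / (a - 1)

/-- The conjugate exponent of `r ∈ (1,∞]`, with `∞' = 1`. -/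
def conjE (r : ℝ≥0∞) : ℝ := if r = ∞ then 1 else conj r.toReal

/-- A `(p',t',Y)`-block supported on the dyadic cube `Q_{j,k}`. -/
def IsBlock (n : ℕ) (p t : ℝ) (j : ℤ) (k : Fin n → ℤ) {Y : Type*} [NormedAddCommGroup Y]
    (b : (Fin n → ℝ) → Y) : Prop :=
  AEStronglyMeasurable b volume ∧ (∀ x, x ∉ dyadicCube n j k → b x = 0) ∧
    (∫⁻ x, (‖b x‖₊ : ℝ≥0∞) ^ conj p) ^ (1 / conj p) ≤ cubeVol n j ^ (1/t - 1/p)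

/-- A representation of `f` as an a.e. convergent sum of blocks with coefficients `lam`. -/
def IsBlockRep (n : ℕ) (p t : ℝ) {Y : Type*} [NormedAddCommGroup Y] [NormedSpace ℝ Y]
    (f : (Fin n → ℝ) → Y) (lam : ℤ × (Fin n → ℤ) → ℝ)
    (b : ℤ × (Fin n → ℤ) → (Fin n → ℝ) → Y) : Prop :=
  (∀ jk : ℤ × (Fin n → ℤ), IsBlock n p t jk.1 jk.2 (b jk)) ∧
    ∀ᵐ x : Fin n → ℝ ∂volume, HasSum (fun jk => lam jk • b jk x) (f x)

/-- The norm of the block space `𝓗_{p'}^{t',r'}(Y)` (parametrized by `p`, `t` and `r'`). -/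
def blockNorm (n : ℕ) (p t r' : ℝ) {Y : Type*} [NormedAddCommGroup Y] [NormedSpace ℝ Y]
    (f : (Fin n → ℝ) → Y) : ℝ≥0∞ :=
  ⨅ (lam : ℤ × (Fin n → ℤ) → ℝ) (b : ℤ × (Fin n → ℤ) → (Fin n → ℝ) → Y)
    (_ : IsBlockRep n p t f lam b),
    (∑' jk : ℤ × (Fin n → ℤ), ENNReal.ofReal |lam jk| ^ r') ^ (1 / r')

/-- Membership in the block space `𝓗_{p'}^{t',r'}(Y)`. -/
def MemBlock (n : ℕ) (p t r' : ℝ) {Y : Type*} [NormedAddCommGroup Y] [NormedSpace ℝ Y]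
    (f : (Fin n → ℝ) → Y) : Prop := blockNorm n p t r' f < ∞

/-- The dyadic averaging operator `E_k` at generation `k`. -/
def Ek (n : ℕ) {X : Type*} [NormedAddCommGroup X] [NormedSpace ℝ X]
    (k : ℤ) (f : (Fin n → ℝ) → X) (x : Fin n → ℝ) : X :=
  ((2:ℝ) ^ ((k:ℝ) * n)) • ∫ y in dyadicCube n k fun i => ⌊(2:ℝ) ^ (k:ℝ) * x i⌋, f y

/-! ### Auxiliary lemmas -/

lemma measurableSet_dyadicCube (n : ℕ) (j : ℤ) (m : Fin n → ℤ) :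
    MeasurableSet (dyadicCube n j m) := by
  have : dyadicCube n j m = ⋂ i, {x : Fin n → ℝ |
      (2:ℝ) ^ (-(j:ℝ)) * m i ≤ x i ∧ x i < (2:ℝ) ^ (-(j:ℝ)) * (m i + 1)} := by
    ext x; simp [dyadicCube, Set.mem_iInter]
  rw [this]
  exact MeasurableSet.iInter fun i =>
    ((measurableSet_le measurable_const (measurable_pi_apply i)).inter
      (measurableSet_lt (measurable_pi_apply i) measurable_const))

lemma mem_dyadicCube_floor (n : ℕ) (x : Fin n → ℝ) :
    x ∈ dyadicCube n 0 (fun i => ⌊x i⌋) := by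
  intro i
  simp only [Int.cast_zero, neg_zero, Real.rpow_zero]
  norm_num
  exact Int.floor_le (x i)

lemma iUnion_dyadicCube (n : ℕ) : ⋃ m : Fin n → ℤ, dyadicCube n 0 m = Set.univ := by
  ext x; simp only [Set.mem_iUnion, Set.mem_univ, iff_true]
  exact ⟨_, mem_dyadicCube_floor n x⟩

lemma holder_block {n : ℕ} {p t : ℝ} {j : ℤ} {k : Fin n → ℤ}
    {X Y : Type*} [NormedAddCommGroup X] [NormedAddCommGroup Y]
    (hp : 1 < p) {b : (Fin n → ℝ) → Y} {f : (Fin n → ℝ) → X}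
    (hb : IsBlock n p t j k b) (hf : AEStronglyMeasurable f volume) :
    ∫⁻ x, (‖f x‖₊ : ℝ≥0∞) * (‖b x‖₊ : ℝ≥0∞) ≤
      cubeVol n j ^ (1/t - 1/p) *
        (∫⁻ x in dyadicCube n j k, (‖f x‖₊ : ℝ≥0∞) ^ p) ^ (1/p) := by
  have hpq : p.HolderConjugate (conj p) := Real.HolderConjugate.conjExponent hp
  set Q := dyadicCube n j k with hQ
  have hQm : MeasurableSet Q := measurableSet_dyadicCube n j k
  set F : (Fin n → ℝ) → ℝ≥0∞ := Q.indicator (fun x => (‖f x‖₊ : ℝ≥0∞)) with hF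
  have hFae : AEMeasurable F volume := (hf.enorm).indicator hQm
  have hbae : AEMeasurable (fun x => (‖b x‖₊ : ℝ≥0∞)) volume := hb.1.enorm
  have hpt : (fun x => (‖f x‖₊ : ℝ≥0∞) * (‖b x‖₊ : ℝ≥0∞)) =
      fun x => F x * (‖b x‖₊ : ℝ≥0∞) := by
    funext x
    by_cases hx : x ∈ Q
    · simp [hF, Set.indicator_of_mem hx]
    · simp [hF, Set.indicator_of_notMem hx, hb.2.1 x hx]
  rw [hpt]
  calc ∫⁻ x, F x * (‖b x‖₊ : ℝ≥0∞) ∂volume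
      ≤ (∫⁻ x, F x ^ p) ^ (1/p) * (∫⁻ x, (‖b x‖₊ : ℝ≥0∞) ^ conj p) ^ (1/conj p) :=
        ENNReal.lintegral_mul_le_Lp_mul_Lq volume hpq hFae hbae
    _ ≤ (∫⁻ x in Q, (‖f x‖₊ : ℝ≥0∞) ^ p) ^ (1/p) * (cubeVol n j ^ (1/t - 1/p)) := by
        refine mul_le_mul' (le_of_eq ?_) hb.2.2
        congr 1
        rw [← lintegral_indicator hQm]
        congr 1
        funext x
        by_cases hx : x ∈ Q
        · simp [hF, Set.indicator_of_mem hx]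
        · simp [hF, Set.indicator_of_notMem hx,
            ENNReal.zero_rpow_of_pos (lt_trans one_pos hp)]
    _ = _ := mul_comm _ _

lemma discrete_holder {ι : Type*} [Countable ι] [MeasurableSpace ι] [MeasurableSingletonClass ι]
    {r : ℝ} (hr : 1 < r) (a c : ι → ℝ≥0∞) :
    ∑' i, a i * c i ≤ (∑' i, a i ^ conj r) ^ (1 / conj r) * (∑' i, c i ^ r) ^ (1 / r) := by
  have hpq : (conj r).HolderConjugate r := (Real.HolderConjugate.conjExponent hr).symm
  have h := ENNReal.lintegral_mul_le_Lp_mul_Lq (Measure.count : Measure ι) hpq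
    (measurable_of_countable a).aemeasurable (measurable_of_countable c).aemeasurable
  simpa [lintegral_count] using h

lemma BMnorm_ofReal_eq {n : ℕ} {p t r : ℝ} (hr : 0 < r) {X : Type*} [NormedAddCommGroup X]
    (f : (Fin n → ℝ) → X) :
    BMnorm n p t (ENNReal.ofReal r) f =
      (∑' jm : ℤ × (Fin n → ℤ), (cubeVol n jm.1 ^ (1/t - 1/p) *
        (∫⁻ x in dyadicCube n jm.1 jm.2, (‖f x‖₊ : ℝ≥0∞) ^ p) ^ (1/p)) ^ r) ^ (1/r) := by
  rw [BMnorm, lrNorm, if_neg ENNReal.ofReal_ne_top, ENNReal.toReal_ofReal hr.le]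

lemma ennrpow_eq_zero {x : ℝ≥0∞} {y : ℝ} (h : x ^ y = 0) (hy : 0 < y) : x = 0 := by
  rcases ENNReal.rpow_eq_zero_iff.mp h with ⟨h1, _⟩ | ⟨_, h2⟩
  · exact h1
  · linarith

/-- The core estimate, for a single block representation with finite coefficient norm. -/
lemma block_BM_holder_core (n : ℕ) (p t r : ℝ)
    {Xp : Type*} [NormedAddCommGroup Xp] [NormedSpace ℝ Xp] [CompleteSpace Xp]
    (hp : 1 < p) (hr : 1 < r)
    (g : (Fin n → ℝ) → Xp) (f : (Fin n → ℝ) → StrongDual ℝ Xp)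
    (lam : ℤ × (Fin n → ℤ) → ℝ) (b : ℤ × (Fin n → ℤ) → (Fin n → ℝ) → Xp)
    (hrep : IsBlockRep n p t g lam b)
    (hfm : AEStronglyMeasurable f volume)
    (hBM : BMnorm n p t (ENNReal.ofReal r) f < ∞)
    (hS : (∑' jk : ℤ × (Fin n → ℤ), ENNReal.ofReal |lam jk| ^ conj r) ^ (1 / conj r) < ∞) :
    MeasureTheory.Integrable (fun x => f x (g x)) volume ∧
      ENNReal.ofReal |∫ x, f x (g x)| ≤
        (∑' jk : ℤ × (Fin n → ℤ), ENNReal.ofReal |lam jk| ^ conj r) ^ (1 / conj r) *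
          BMnorm n p t (ENNReal.ofReal r) f := by
  have hBMeq : BMnorm n p t (ENNReal.ofReal r) f =
      (∑' jm : ℤ × (Fin n → ℤ), (cubeVol n jm.1 ^ (1/t - 1/p) *
        (∫⁻ x in dyadicCube n jm.1 jm.2, (‖f x‖₊ : ℝ≥0∞) ^ p) ^ (1/p)) ^ r) ^ (1/r) :=
    BMnorm_ofReal_eq (lt_trans one_pos hr) f
  -- sum of weighted integrals is bounded by S * BM
  have key : (∑' jk : ℤ × (Fin n → ℤ), ENNReal.ofReal |lam jk| *
      ∫⁻ x, (‖f x‖₊ : ℝ≥0∞) * (‖b jk x‖₊ : ℝ≥0∞)) ≤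
      (∑' jk : ℤ × (Fin n → ℤ), ENNReal.ofReal |lam jk| ^ conj r) ^ (1 / conj r) *
        BMnorm n p t (ENNReal.ofReal r) f := by
    rw [hBMeq]
    refine le_trans (ENNReal.tsum_le_tsum fun jk =>
      mul_le_mul_right (holder_block hp (hrep.1 jk) hfm) (ENNReal.ofReal |lam jk|)) ?_
    exact discrete_holder hr (fun jk => ENNReal.ofReal |lam jk|)
      (fun jm => cubeVol n jm.1 ^ (1/t - 1/p) *
        (∫⁻ x in dyadicCube n jm.1 jm.2, (‖f x‖₊ : ℝ≥0∞) ^ p) ^ (1/p))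
  -- the dominating function
  have hGmeas : ∀ jk : ℤ × (Fin n → ℤ), AEMeasurable
      (fun x => ENNReal.ofReal |lam jk| * ((‖f x‖₊ : ℝ≥0∞) * (‖b jk x‖₊ : ℝ≥0∞))) volume :=
    fun jk => (hfm.enorm.mul (hrep.1 jk).1.enorm).const_mul _
  have hGae : AEMeasurable (fun x => ∑' jk : ℤ × (Fin n → ℤ),
      ENNReal.ofReal |lam jk| * ((‖f x‖₊ : ℝ≥0∞) * (‖b jk x‖₊ : ℝ≥0∞))) volume :=
    AEMeasurable.ennreal_tsum hGmeas
  have hGint : (∫⁻ x, ∑' jk : ℤ × (Fin n → ℤ),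
      ENNReal.ofReal |lam jk| * ((‖f x‖₊ : ℝ≥0∞) * (‖b jk x‖₊ : ℝ≥0∞))) ≤
      (∑' jk : ℤ × (Fin n → ℤ), ENNReal.ofReal |lam jk| ^ conj r) ^ (1 / conj r) *
        BMnorm n p t (ENNReal.ofReal r) f := by
    rw [lintegral_tsum hGmeas]
    refine le_trans (le_of_eq ?_) key
    congr 1
    funext jk
    exact lintegral_const_mul' _ _ ENNReal.ofReal_ne_top
  have hGlt : (∫⁻ x, ∑' jk : ℤ × (Fin n → ℤ),
      ENNReal.ofReal |lam jk| * ((‖f x‖₊ : ℝ≥0∞) * (‖b jk x‖₊ : ℝ≥0∞))) < ∞ :=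
    lt_of_le_of_lt hGint (ENNReal.mul_lt_top hS hBM)
  -- a.e. pointwise control
  have haeG : ∀ᵐ x ∂(volume : Measure (Fin n → ℝ)), (∑' jk : ℤ × (Fin n → ℤ),
      ENNReal.ofReal |lam jk| * ((‖f x‖₊ : ℝ≥0∞) * (‖b jk x‖₊ : ℝ≥0∞))) < ∞ :=
    ae_lt_top' hGae hGlt.ne
  have haekey2 : ∀ᵐ x ∂(volume : Measure (Fin n → ℝ)),
      HasSum (fun jk => lam jk * f x (b jk x)) (f x (g x)) ∧
        (‖f x (g x)‖₊ : ℝ≥0∞) ≤ ∑' jk : ℤ × (Fin n → ℤ),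
          ENNReal.ofReal |lam jk| * ((‖f x‖₊ : ℝ≥0∞) * (‖b jk x‖₊ : ℝ≥0∞)) := by
    filter_upwards [hrep.2, haeG] with x hs hGx
    have hs2 : HasSum (fun jk => lam jk * f x (b jk x)) (f x (g x)) := by
      have := (f x).hasSum hs
      simpa [_root_.map_smul, smul_eq_mul] using this
    refine ⟨hs2, ?_⟩
    have hterm : ∀ jk : ℤ × (Fin n → ℤ), (‖lam jk * f x (b jk x)‖₊ : ℝ≥0∞) ≤
        ENNReal.ofReal |lam jk| * ((‖f x‖₊ : ℝ≥0∞) * (‖b jk x‖₊ : ℝ≥0∞)) := by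
      intro jk
      rw [nnnorm_mul, ENNReal.coe_mul]
      refine mul_le_mul' (le_of_eq ?_) ?_
      · rw [← Real.enorm_eq_ofReal_abs, enorm_eq_nnnorm]
      · rw [← ENNReal.coe_mul]
        exact_mod_cast ((f x).le_opNorm (b jk x))
    have hsum_norms : (∑' jk : ℤ × (Fin n → ℤ), (‖lam jk * f x (b jk x)‖₊ : ℝ≥0∞)) ≤
        ∑' jk : ℤ × (Fin n → ℤ),
          ENNReal.ofReal |lam jk| * ((‖f x‖₊ : ℝ≥0∞) * (‖b jk x‖₊ : ℝ≥0∞)) :=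
      ENNReal.tsum_le_tsum hterm
    have hsummable : Summable fun jk : ℤ × (Fin n → ℤ) => ‖lam jk * f x (b jk x)‖₊ := by
      rw [← ENNReal.tsum_coe_ne_top_iff_summable]
      exact (lt_of_le_of_lt hsum_norms hGx).ne
    calc (‖f x (g x)‖₊ : ℝ≥0∞)
        = (‖∑' jk : ℤ × (Fin n → ℤ), lam jk * f x (b jk x)‖₊ : ℝ≥0∞) := by rw [hs2.tsum_eq]
      _ ≤ (((∑' jk : ℤ × (Fin n → ℤ), ‖lam jk * f x (b jk x)‖₊) : NNReal) : ℝ≥0∞) := by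
          exact_mod_cast nnnorm_tsum_le hsummable
      _ = ∑' jk : ℤ × (Fin n → ℤ), (‖lam jk * f x (b jk x)‖₊ : ℝ≥0∞) :=
          ENNReal.coe_tsum hsummable
      _ ≤ _ := hsum_norms
  -- measurability of the pairing
  have hAESM : AEStronglyMeasurable (fun x => f x (g x)) volume := by
    have hterm : ∀ jk : ℤ × (Fin n → ℤ),
        AEStronglyMeasurable (fun x => lam jk * f x (b jk x)) volume := by
      intro jk
      have := (ContinuousLinearMap.id ℝ (StrongDual ℝ Xp)).aestronglyMeasurable_comp₂
        hfm (hrep.1 jk).1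
      exact this.const_mul _
    refine aestronglyMeasurable_of_tendsto_ae (atTop : Filter (Finset (ℤ × (Fin n → ℤ))))
      (fun s => Finset.aestronglyMeasurable_sum s fun jk _ => hterm jk) ?_
    filter_upwards [haekey2] with x hx
    simp only [Finset.sum_apply]
    exact hx.1
  have hlint : (∫⁻ x, (‖f x (g x)‖₊ : ℝ≥0∞)) ≤
      (∑' jk : ℤ × (Fin n → ℤ), ENNReal.ofReal |lam jk| ^ conj r) ^ (1 / conj r) *
        BMnorm n p t (ENNReal.ofReal r) f := by
    refine le_trans (lintegral_mono_ae ?_) hGint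
    filter_upwards [haekey2] with x hx using hx.2
  have hInt : MeasureTheory.Integrable (fun x => f x (g x)) volume :=
    ⟨hAESM, lt_of_le_of_lt hlint (ENNReal.mul_lt_top hS hBM)⟩
  refine ⟨hInt, ?_⟩
  calc ENNReal.ofReal |∫ x, f x (g x)| ≤ ENNReal.ofReal (∫ x, ‖f x (g x)‖) := by
        apply ENNReal.ofReal_le_ofReal
        rw [← Real.norm_eq_abs]
        exact norm_integral_le_integral_norm _
    _ = ∫⁻ x, (‖f x (g x)‖₊ : ℝ≥0∞) := ofReal_integral_norm_eq_lintegral_enorm hInt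
    _ ≤ _ := hlint


theorem block_BM_holder (n : ℕ) (p t r : ℝ)
    {Xp : Type*} [NormedAddCommGroup Xp] [NormedSpace ℝ Xp] [CompleteSpace Xp]
    (hp : 1 < p) (hpt : p < t) (htr : t < r)
    (g : (Fin n → ℝ) → Xp) (f : (Fin n → ℝ) → StrongDual ℝ Xp)
    (hg : MemBlock n p t (conj r) g) (hf : MemBM n p t (ENNReal.ofReal r) f) :
    MeasureTheory.Integrable (fun x => f x (g x)) volume ∧
      ENNReal.ofReal |∫ x, f x (g x)| ≤
        blockNorm n p t (conj r) g * BMnorm n p t (ENNReal.ofReal r) f := by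
  have hr : 1 < r := lt_trans (lt_trans hp hpt) htr
  obtain ⟨hfm, hBM⟩ := hf
  set BM := BMnorm n p t (ENNReal.ofReal r) f with hBMdef
  by_cases hBM0 : BM = 0
  -- degenerate case : `f = 0` a.e.
  · have hf0 : ∀ᵐ x ∂(volume : Measure (Fin n → ℝ)), f x = 0 := by
      have hr0 : (0:ℝ) < r := lt_trans one_pos hr
      have hp0 : (0:ℝ) < p := lt_trans one_pos hp
      rw [hBMdef, BMnorm_ofReal_eq hr0] at hBM0
      have htsum : (∑' jm : ℤ × (Fin n → ℤ), (cubeVol n jm.1 ^ (1/t - 1/p) *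
          (∫⁻ x in dyadicCube n jm.1 jm.2, (‖f x‖₊ : ℝ≥0∞) ^ p) ^ (1/p)) ^ r) = 0 :=
        ennrpow_eq_zero hBM0 (by positivity)
      have hcube : ∀ m : Fin n → ℤ,
          ∫⁻ x in dyadicCube n 0 m, (‖f x‖₊ : ℝ≥0∞) ^ p = 0 := by
        intro m
        have h0 := (ENNReal.tsum_eq_zero.mp htsum) ((0:ℤ), m)
        have h1 : cubeVol n (0:ℤ) ^ (1/t - 1/p) *
            (∫⁻ x in dyadicCube n 0 m, (‖f x‖₊ : ℝ≥0∞) ^ p) ^ (1/p) = 0 :=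
          ennrpow_eq_zero h0 hr0
        have hc1 : cubeVol n (0:ℤ) ^ (1/t - 1/p) = 1 := by
          have : cubeVol n (0:ℤ) = 1 := by simp [cubeVol]
          rw [this, ENNReal.one_rpow]
        rw [hc1, one_mul] at h1
        exact ennrpow_eq_zero h1 (by positivity)
      have hzero : ∫⁻ x, (‖f x‖₊ : ℝ≥0∞) ^ p = 0 := by
        have hle := lintegral_iUnion_le (μ := (volume : Measure (Fin n → ℝ)))
          (fun m : Fin n → ℤ => dyadicCube n 0 m) (fun x => (‖f x‖₊ : ℝ≥0∞) ^ p)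
        rw [iUnion_dyadicCube, Measure.restrict_univ] at hle
        refine le_antisymm (le_trans hle (le_of_eq ?_)) zero_le
        simp [hcube]
      have h2 := (lintegral_eq_zero_iff' (hfm.enorm.pow_const p)).mp hzero
      filter_upwards [h2] with x hx
      have : (‖f x‖₊ : ℝ≥0∞) = 0 := ennrpow_eq_zero hx hp0
      simpa using this
    have hfg0 : (fun x => f x (g x)) =ᵐ[volume] (fun _ => (0:ℝ)) := by
      filter_upwards [hf0] with x hx
      simp [hx]
    constructor
    · exact (integrable_zero _ _ _).congr hfg0.symm
    · have : ∫ x, f x (g x) = 0 := by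
        rw [integral_congr_ae hfg0, integral_zero]
      simp [this]
  -- main case
  · have hBMne : BM ≠ ∞ := hBM.ne
    have hbound : ∀ (lam : ℤ × (Fin n → ℤ) → ℝ)
        (b : ℤ × (Fin n → ℤ) → (Fin n → ℝ) → Xp), IsBlockRep n p t g lam b →
        ENNReal.ofReal |∫ x, f x (g x)| ≤
          (∑' jk : ℤ × (Fin n → ℤ), ENNReal.ofReal |lam jk| ^ conj r) ^ (1 / conj r) * BM := by
      intro lam b hrep
      by_cases hS : (∑' jk : ℤ × (Fin n → ℤ),
          ENNReal.ofReal |lam jk| ^ conj r) ^ (1 / conj r) < ∞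
      · exact (block_BM_holder_core n p t r hp hr g f lam b hrep hfm hBM hS).2
      · push_neg at hS
        rw [top_le_iff.mp hS, top_mul hBM0]
        exact le_top
    have hwit : ∃ (lam : ℤ × (Fin n → ℤ) → ℝ)
        (b : ℤ × (Fin n → ℤ) → (Fin n → ℝ) → Xp), IsBlockRep n p t g lam b ∧
        (∑' jk : ℤ × (Fin n → ℤ), ENNReal.ofReal |lam jk| ^ conj r) ^ (1 / conj r) < ∞ := by
      rw [MemBlock, blockNorm] at hg
      obtain ⟨lam, hlam⟩ := iInf_lt_iff.mp hg
      obtain ⟨b, hb⟩ := iInf_lt_iff.mp hlam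
      obtain ⟨hrep, hval⟩ := iInf_lt_iff.mp hb
      exact ⟨lam, b, hrep, hval⟩
    obtain ⟨lam₀, b₀, hrep₀, hS₀⟩ := hwit
    refine ⟨(block_BM_holder_core n p t r hp hr g f lam₀ b₀ hrep₀ hfm hBM hS₀).1, ?_⟩
    have hdiv : ENNReal.ofReal |∫ x, f x (g x)| / BM ≤ blockNorm n p t (conj r) g := by
      rw [blockNorm]
      refine le_iInf fun lam => le_iInf fun b => le_iInf fun hrep => ?_
      exact (ENNReal.div_le_iff_le_mul (Or.inl hBM0) (Or.inl hBMne)).mpr (hbound lam b hrep)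
    calc ENNReal.ofReal |∫ x, f x (g x)|
        = (ENNReal.ofReal |∫ x, f x (g x)| / BM) * BM :=
          (ENNReal.div_mul_cancel hBM0 hBMne).symm
      _ ≤ blockNorm n p t (conj r) g * BM := mul_le_mul_left hdiv _

end
end

section
/- Let $X$ have predual $^*X$, with $^*X$ reflexive or $X$ separable, and let $1 < p < t < r < \infty$ or $1 < p \le t < r = \infty$. Then the space $L_c^{p'}(^*X)$ of compactly supported $p'$-integrable ${}^*X$-valued functions is dense in $\mathcal{H}_{p'}^{t',r'}(^*X)$. -/
open MeasureTheory Filter ENNReal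

noncomputable section

lemma aux_rpow_ne_top {x : ℝ≥0∞} (h0 : x ≠ 0) (ht : x ≠ ⊤) (y : ℝ) : x ^ y ≠ ⊤ := by
  simp [ENNReal.rpow_eq_top_iff, h0, ht]

lemma cubeVol_ne_top (n : ℕ) (j : ℤ) : cubeVol n j ≠ ⊤ :=
  aux_rpow_ne_top (by norm_num) (by norm_num) _

lemma cubeVol_ne_zero (n : ℕ) (j : ℤ) : cubeVol n j ≠ 0 :=
  (ENNReal.rpow_pos (by norm_num) (by norm_num)).ne'

lemma dyadicCube_closure_isCompact (n : ℕ) (j : ℤ) (m : Fin n → ℤ) :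
    IsCompact (closure (dyadicCube n j m)) := by
  have hcpt : IsCompact (Set.pi Set.univ
      (fun i => Set.Icc ((2:ℝ) ^ (-(j:ℝ)) * m i) ((2:ℝ) ^ (-(j:ℝ)) * (m i + 1)))) :=
    isCompact_univ_pi fun i => isCompact_Icc
  refine hcpt.of_isClosed_subset isClosed_closure (closure_minimal ?_ hcpt.isClosed)
  intro x hx i _
  exact ⟨(hx i).1, (hx i).2.le⟩

theorem Lp_c_dense_in_block_space (n : ℕ) (p t : ℝ) (r : ℝ≥0∞)
    {Xp : Type*} [NormedAddCommGroup Xp] [NormedSpace ℝ Xp] [CompleteSpace Xp]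
    (hXp : Function.Surjective ⇑(NormedSpace.inclusionInDoubleDual ℝ Xp) ∨
      TopologicalSpace.SeparableSpace (StrongDual ℝ Xp))
    (hp : 1 < p)
    (hcase : (p < t ∧ ENNReal.ofReal t < r ∧ r ≠ ∞) ∨ (p ≤ t ∧ r = ∞))
    (f : (Fin n → ℝ) → Xp) (hf : MemBlock n p t (conjE r) f)
    (ε : ℝ≥0∞) (hε : 0 < ε) :
    ∃ g : (Fin n → ℝ) → Xp,
      MeasureTheory.MemLp g (ENNReal.ofReal (conj p)) volume ∧ HasCompactSupport g ∧
        blockNorm n p t (conjE r) (fun x => f x - g x) < ε := by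
  -- notation
  set r' : ℝ := conjE r with hr'def
  have hp0 : (0:ℝ) < p := lt_trans one_pos hp
  have hconjp_pos : 0 < conj p := div_pos hp0 (by linarith)
  have hr'pos : 0 < r' := by
    rcases hcase with ⟨hpt, htr, hrtop⟩ | ⟨_, hrtop⟩
    · have ht1 : (1:ℝ) < t := lt_trans hp hpt
      have hrt : t < r.toReal := by
        have := (ENNReal.toReal_lt_toReal ENNReal.ofReal_ne_top hrtop).mpr htr
        rwa [ENNReal.toReal_ofReal (by linarith : (0:ℝ) ≤ t)] at this
      have h1r : (1:ℝ) < r.toReal := lt_trans ht1 hrt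
      simp only [hr'def, conjE, hrtop, if_neg hrtop, conj]
      exact div_pos (by linarith) (by linarith)
    · simp [hr'def, conjE, hrtop]
  have hr'ne : r' ≠ 0 := hr'pos.ne'
  -- extract a block representation with finite coefficient norm
  have hf' : ∃ lam b, IsBlockRep n p t f lam b ∧
      (∑' jk : ℤ × (Fin n → ℤ), ENNReal.ofReal |lam jk| ^ r') ^ (1 / r') < ∞ := by
    simp only [MemBlock, blockNorm, iInf_lt_iff] at hf
    obtain ⟨lam, b, hrep, hS⟩ := hf
    exact ⟨lam, b, hrep, hS⟩
  obtain ⟨lam, b, hrep, hS⟩ := hf'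
  set a : ℤ × (Fin n → ℤ) → ℝ≥0∞ := fun jk => ENNReal.ofReal |lam jk| ^ r' with ha
  have hT : ∑' jk, a jk ≠ ∞ := by
    have := (ENNReal.rpow_lt_top_iff_of_pos (by positivity : (0:ℝ) < 1 / r')).mp hS
    exact this.ne
  -- choose a good finset
  set η : ℝ≥0∞ := (min ε 1) ^ r' with hη
  have hmin_pos : 0 < min ε 1 := lt_min hε one_pos
  have hmin_ne_top : min ε 1 ≠ ⊤ := (lt_of_le_of_lt (min_le_right _ _) one_lt_top).ne
  have hηpos : 0 < η := ENNReal.rpow_pos hmin_pos hmin_ne_top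
  obtain ⟨F, hF⟩ : ∃ F : Finset (ℤ × (Fin n → ℤ)),
      (∑' jk : {x // x ∉ F}, a jk) < η :=
    ((tendsto_order.1 (ENNReal.tendsto_tsum_compl_atTop_zero hT)).2 _ hηpos).exists
  -- the approximating function
  refine ⟨fun x => ∑ jk ∈ F, lam jk • b jk x, ?_, ?_, ?_⟩
  · -- Memℒp
    refine memLp_finset_sum (f := fun jk x => lam jk • b jk x) F fun jk _ => MemLp.const_smul ?_ (lam jk)
    have hblock := (hrep.1 jk)
    refine ⟨hblock.1, ?_⟩
    have hq0 : ENNReal.ofReal (conj p) ≠ 0 := by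
      simp [ENNReal.ofReal_eq_zero, not_le, hconjp_pos]
    rw [eLpNorm_eq_lintegral_rpow_enorm_toReal hq0 ENNReal.ofReal_ne_top,
      ENNReal.toReal_ofReal hconjp_pos.le]
    refine lt_of_le_of_lt hblock.2.2 ?_
    exact (aux_rpow_ne_top (cubeVol_ne_zero n jk.1) (cubeVol_ne_top n jk.1) _).lt_top
  · -- compact support
    set K : Set (Fin n → ℝ) := ⋃ jk ∈ F, closure (dyadicCube n jk.1 jk.2) with hK
    have hKc : IsCompact K :=
      F.isCompact_biUnion fun jk _ => dyadicCube_closure_isCompact n jk.1 jk.2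
    have hsupp : Function.support (fun x => ∑ jk ∈ F, lam jk • b jk x) ⊆ K := by
      intro x hx
      obtain ⟨jk, hjkF, hne⟩ := Finset.exists_ne_zero_of_sum_ne_zero hx
      have hbx : b jk x ≠ 0 := by
        intro h0; apply hne; simp [h0]
      have hxQ : x ∈ dyadicCube n jk.1 jk.2 := by
        by_contra hxQ; exact hbx ((hrep.1 jk).2.1 x hxQ)
      exact Set.mem_biUnion hjkF (subset_closure hxQ)
    exact hKc.of_isClosed_subset isClosed_closure (closure_minimal hsupp hKc.isClosed)
  · -- block norm of the remainder
    set g : (Fin n → ℝ) → Xp := fun x => ∑ jk ∈ F, lam jk • b jk x with hg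
    set lam' : ℤ × (Fin n → ℤ) → ℝ := fun jk => if jk ∈ F then 0 else lam jk with hlam'
    have hrep' : IsBlockRep n p t (fun x => f x - g x) lam' b := by
      refine ⟨hrep.1, ?_⟩
      filter_upwards [hrep.2] with x hx
      have hfin : HasSum (fun jk : ℤ × (Fin n → ℤ) =>
          if jk ∈ F then lam jk • b jk x else 0) (g x) := by
        have h1 : ∀ jk ∉ F,
            (if jk ∈ F then lam jk • b jk x else (0:Xp)) = 0 := fun jk hjk => if_neg hjk
        have h2 := hasSum_sum_of_ne_finset_zero (L := SummationFilter.unconditional _) h1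
        simpa [hg, Finset.sum_ite_mem, Finset.inter_self] using h2
      have h2 := hx.sub hfin
      have heq : (fun jk => lam' jk • b jk x)
          = fun jk => lam jk • b jk x - (if jk ∈ F then lam jk • b jk x else 0) := by
        funext jk
        by_cases hjk : jk ∈ F <;> simp [hlam', hjk]
      rw [heq]
      exact h2
    have hle : blockNorm n p t r' (fun x => f x - g x)
        ≤ (∑' jk : ℤ × (Fin n → ℤ), ENNReal.ofReal |lam' jk| ^ r') ^ (1 / r') := by
      exact iInf_le_of_le lam' (iInf_le_of_le b (iInf_le _ hrep'))
    have hsum_eq : (∑' jk : ℤ × (Fin n → ℤ), ENNReal.ofReal |lam' jk| ^ r')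
        = ∑' jk : {x // x ∉ F}, a jk := by
      have hsub : (∑' jk : {x // x ∉ F}, a jk)
          = ∑' jk, Set.indicator {x : ℤ × (Fin n → ℤ) | x ∉ F} a jk :=
        tsum_subtype _ a
      rw [hsub]
      refine tsum_congr fun jk => ?_
      by_cases hjk : jk ∈ F
      · simp [Set.indicator, hlam', hjk, ENNReal.zero_rpow_of_pos hr'pos]
      · simp [Set.indicator, hlam', hjk, ha]
    refine lt_of_le_of_lt hle ?_
    rw [hsum_eq]
    calc (∑' jk : {x // x ∉ F}, a jk) ^ (1 / r')
        < η ^ (1 / r') := ENNReal.rpow_lt_rpow hF (by positivity)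
      _ = (min ε 1) ^ (r' * (1 / r')) := by rw [ENNReal.rpow_mul]
      _ = min ε 1 := by rw [mul_one_div_cancel hr'ne, ENNReal.rpow_one]
      _ ≤ ε := min_le_left _ _


end
end
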